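/- Under the bistable Solow–Swan hypotheses, trajectories starting to the right of the unstable equilibrium E₁ reach the safe equilibrium E: if x is a solution with initial condition x₀ > E₁, then x(t) → E as t → ∞. -/

import Mathlib

open Filter Set Topology

/-- Upper barrier: a solution starting below `c` with `G c < 0` stays below `c`. -/
lemma solow_barrier_upper (x G : ℝ → ℝ) (c : ℝ)
    (hode : ∀ t : ℝ, 0 ≤ t → HasDerivAt x (G (x t)) t)
    (h0 : x 0 < c) (hGc : G c < 0) : ∀ t : ℝ, 0 ≤ t → x t < c := by
  by_contra h
  push_neg at h
  obtain ⟨t₁, ht₁, hxt₁⟩ := h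
  have hxc : ContinuousOn x (Set.Icc 0 t₁) := fun t ht =>
    ((hode t ht.1).continuousAt).continuousWithinAt
  set S : Set ℝ := Set.Icc 0 t₁ ∩ x ⁻¹' Set.Ici c with hS
  have hScl : IsClosed S := hxc.preimage_isClosed_of_isClosed isClosed_Icc isClosed_Ici
  have hScomp : IsCompact S := isCompact_Icc.of_isClosed_subset hScl Set.inter_subset_left
  have hSne : S.Nonempty := ⟨t₁, ⟨⟨ht₁, le_rfl⟩, hxt₁⟩⟩
  set t₀ := sInf S with ht₀def
  have ht₀S : t₀ ∈ S := hScomp.sInf_mem hSne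
  have ht₀0 : 0 ≤ t₀ := ht₀S.1.1
  have ht₀c : c ≤ x t₀ := ht₀S.2
  have ht₀pos : 0 < t₀ := by
    rcases eq_or_lt_of_le ht₀0 with h | h
    · exfalso; rw [← h] at ht₀c; linarith
    · exact h
  have hltc : ∀ t, 0 ≤ t → t < t₀ → x t < c := by
    intro t ht htt₀
    by_contra hcc
    push_neg at hcc
    have htS : t ∈ S := ⟨⟨ht, htt₀.le.trans ht₀S.1.2⟩, hcc⟩
    exact absurd (csInf_le hScomp.bddBelow htS) (not_le.2 htt₀)
  -- x t₀ = c
  have hxt₀ : x t₀ = c := by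
    refine le_antisymm ?_ ht₀c
    have htend : Tendsto x (𝓝[<] t₀) (𝓝 (x t₀)) :=
      ((hode t₀ ht₀0).continuousAt).tendsto.mono_left nhdsWithin_le_nhds
    refine le_of_tendsto htend ?_
    filter_upwards [Ioo_mem_nhdsLT_of_mem (⟨ht₀pos, le_rfl⟩ : t₀ ∈ Set.Ioc 0 t₀)] with t ht
    exact (hltc t ht.1.le ht.2).le
  -- slope argument
  have hderiv : HasDerivAt x (G c) t₀ := hxt₀ ▸ hode t₀ ht₀0
  have hslope := hasDerivAt_iff_tendsto_slope.1 hderiv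
  have hev : ∀ᶠ t in 𝓝[<] t₀, slope x t₀ t < 0 :=
    (hslope.mono_left (nhdsWithin_mono _ fun y hy => ne_of_lt hy)).eventually_lt_const hGc
  have hmem : Set.Ioo 0 t₀ ∈ 𝓝[<] t₀ :=
    Ioo_mem_nhdsLT_of_mem (⟨ht₀pos, le_rfl⟩ : t₀ ∈ Set.Ioc 0 t₀)
  obtain ⟨t, hts, htIoo⟩ := (hev.and (eventually_mem_set.2 hmem)).exists
  rw [slope_def_field] at hts
  have h1 : x t - x t₀ > 0 := by
    rcases div_neg_iff.1 hts with ⟨ha, hb⟩ | ⟨ha, hb⟩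
    · linarith [htIoo.2, hb]
    · exact absurd hb (by linarith [htIoo.2])
  have h2 : x t < c := hltc t htIoo.1.le htIoo.2
  rw [hxt₀] at h1
  linarith

/-- Lower barrier, by symmetry. -/
lemma solow_barrier_lower (x G : ℝ → ℝ) (c : ℝ)
    (hode : ∀ t : ℝ, 0 ≤ t → HasDerivAt x (G (x t)) t)
    (h0 : c < x 0) (hGc : 0 < G c) : ∀ t : ℝ, 0 ≤ t → c < x t := by
  have key := solow_barrier_upper (fun t => -x t) (fun z => -G (-z)) (-c)
    (fun t ht => by simp only [neg_neg]; exact (hode t ht).neg) (by simpa using h0) (by simpa using hGc)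
  intro t ht
  have := key t ht
  simpa using this

/-- Monotone bounded convergence on `[0,∞)`. -/
lemma solow_tendsto_sSup (x : ℝ → ℝ) (B : ℝ) (hmono : MonotoneOn x (Set.Ici 0))
    (hub : ∀ t : ℝ, 0 ≤ t → x t ≤ B) :
    Tendsto x atTop (𝓝 (sSup (x '' Set.Ici 0))) := by
  have hne : (x '' Set.Ici 0).Nonempty := ⟨x 0, 0, Set.mem_Ici.2 le_rfl, rfl⟩
  have hbdd : BddAbove (x '' Set.Ici 0) := ⟨B, by rintro y ⟨t, ht, rfl⟩; exact hub t ht⟩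
  rw [tendsto_order]
  constructor
  · intro a ha
    obtain ⟨y, ⟨t₀, ht₀, rfl⟩, hy⟩ := exists_lt_of_lt_csSup hne ha
    filter_upwards [eventually_ge_atTop t₀] with t ht
    exact lt_of_lt_of_le hy (hmono ht₀ (le_trans ht₀ ht) ht)
  · intro a ha
    filter_upwards [eventually_ge_atTop (0:ℝ)] with t ht
    exact lt_of_le_of_lt (le_csSup hbdd ⟨t, ht, rfl⟩) ha

/-- Antitone bounded convergence on `[0,∞)`. -/
lemma solow_tendsto_sInf (x : ℝ → ℝ) (B : ℝ) (hmono : AntitoneOn x (Set.Ici 0))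
    (hlb : ∀ t : ℝ, 0 ≤ t → B ≤ x t) :
    Tendsto x atTop (𝓝 (sInf (x '' Set.Ici 0))) := by
  have hne : (x '' Set.Ici 0).Nonempty := ⟨x 0, 0, Set.mem_Ici.2 le_rfl, rfl⟩
  have hbdd : BddBelow (x '' Set.Ici 0) := ⟨B, by rintro y ⟨t, ht, rfl⟩; exact hlb t ht⟩
  rw [tendsto_order]
  constructor
  · intro a ha
    filter_upwards [eventually_ge_atTop (0:ℝ)] with t ht
    exact lt_of_lt_of_le ha (csInf_le hbdd ⟨t, ht, rfl⟩)
  · intro a ha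
    obtain ⟨y, ⟨t₀, ht₀, rfl⟩, hy⟩ := exists_lt_of_csInf_lt hne ha
    filter_upwards [eventually_ge_atTop t₀] with t ht
    exact lt_of_le_of_lt (hmono ht₀ (le_trans ht₀ ht) ht) hy

/-- Under the bistable Solow–Swan hypotheses, trajectories starting to the right
of the unstable equilibrium `E₁` reach the safe equilibrium `E`. -/
theorem solow_swan_bistable_right_to_E
    (F : ℝ → ℝ) (C E₁ E : ℝ) (hC : 0 < C)
    (hF : LocallyLipschitz F) (hF0 : F 0 = 0)
    (hE₁ : 0 < E₁) (hE₁E : E₁ < E)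
    (hE₁eq : F E₁ = C * E₁) (hEeq : F E = C * E)
    (hlt₁ : ∀ z ∈ Set.Ioo (0 : ℝ) E₁, F z < C * z)
    (hgt : ∀ z ∈ Set.Ioo E₁ E, C * z < F z)
    (hlt : ∀ z : ℝ, E < z → F z < C * z)
    (x : ℝ → ℝ) (x₀ : ℝ) (hx₀ : E₁ < x₀) (hinit : x 0 = x₀)
    (hode : ∀ t : ℝ, 0 ≤ t → HasDerivAt x (F (x t) - C * x t) t) :
    Filter.Tendsto x Filter.atTop (nhds E) := by
  set G : ℝ → ℝ := fun z => F z - C * z with hGdef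
  have hode' : ∀ t : ℝ, 0 ≤ t → HasDerivAt x (G (x t)) t := hode
  have hGE : G E = 0 := by simp [hGdef, hEeq]
  have hGpos : ∀ z : ℝ, E₁ < z → z < E → 0 < G z := fun z h1 h2 => by
    have := hgt z ⟨h1, h2⟩; simp [hGdef]; linarith
  have hGneg : ∀ z : ℝ, E < z → G z < 0 := fun z h => by
    have := hlt z h; simp [hGdef]; linarith
  have hGcont : Continuous G := (hF.continuous).sub (continuous_const.mul continuous_id)
  have hxcont : ContinuousOn x (Set.Ici 0) := fun t ht =>
    ((hode' t ht).continuousAt).continuousWithinAt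
  have hxdiff : DifferentiableOn ℝ x (interior (Set.Ici (0:ℝ))) := by
    rw [interior_Ici]
    exact fun t ht => ((hode' t (le_of_lt ht)).differentiableAt).differentiableWithinAt
  rcases le_or_gt x₀ E with hcase | hcase
  · -- x₀ ≤ E : monotone increase to E
    have hup : ∀ t : ℝ, 0 ≤ t → x t ≤ E := by
      intro t ht
      by_contra h
      push_neg at h
      have hb := solow_barrier_upper x G ((E + x t) / 2) hode'
        (by rw [hinit]; linarith) (hGneg _ (by linarith)) t ht
      linarith
    have hlow : ∀ t : ℝ, 0 ≤ t → x₀ ≤ x t := by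
      intro t ht
      by_contra h
      push_neg at h
      set c := max ((E₁ + x₀) / 2) ((x t + x₀) / 2) with hcdef
      have hc1 : E₁ < c := lt_of_lt_of_le (by linarith) (le_max_left _ _)
      have hc2 : c < x₀ := max_lt (by linarith) (by linarith)
      have hc3 : x t ≤ c := le_trans (by linarith) (le_max_right _ _)
      have hb := solow_barrier_lower x G c hode' (by rw [hinit]; exact hc2)
        (hGpos c hc1 (lt_of_lt_of_le hc2 hcase)) t ht
      linarith
    have hmono : MonotoneOn x (Set.Ici 0) := by
      refine monotoneOn_of_deriv_nonneg (convex_Ici 0) hxcont hxdiff ?_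
      intro t ht
      rw [interior_Ici] at ht
      rw [(hode' t ht.le).deriv]
      rcases eq_or_lt_of_le (hup t ht.le) with h | h
      · rw [h, hGE]
      · exact (hGpos _ (lt_of_lt_of_le hx₀ (hlow t ht.le)) h).le
    set L := sSup (x '' Set.Ici 0) with hLdef
    have hL := solow_tendsto_sSup x E hmono hup
    have hne : (x '' Set.Ici 0).Nonempty := ⟨x 0, 0, Set.mem_Ici.2 le_rfl, rfl⟩
    have hbdd : BddAbove (x '' Set.Ici 0) := ⟨E, by rintro y ⟨t, ht, rfl⟩; exact hup t ht⟩
    have hLle : L ≤ E := csSup_le hne (by rintro y ⟨t, ht, rfl⟩; exact hup t ht)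
    have hLge : x₀ ≤ L := hinit ▸ le_csSup hbdd ⟨0, Set.mem_Ici.2 le_rfl, rfl⟩
    have hxleL : ∀ t : ℝ, 0 ≤ t → x t ≤ L := fun t ht => le_csSup hbdd ⟨t, ht, rfl⟩
    have hLE : L = E := by
      by_contra h
      have hLE' : L < E := lt_of_le_of_ne hLle h
      obtain ⟨z₀, hz₀K, hz₀min⟩ := isCompact_Icc.exists_isMinOn
        (Set.nonempty_Icc.2 hLge) hGcont.continuousOn
      have hε : 0 < G z₀ := hGpos z₀ (lt_of_lt_of_le hx₀ hz₀K.1) (lt_of_le_of_lt hz₀K.2 hLE')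
      set y : ℝ → ℝ := fun t => x t - G z₀ * t with hydef
      have hydiff : ∀ t : ℝ, 0 ≤ t → HasDerivAt y (G (x t) - G z₀) t := by
        intro t ht
        have h2 : HasDerivAt (fun s : ℝ => G z₀ * s) (G z₀) t := by
          simpa using (hasDerivAt_id t).const_mul (G z₀)
        exact (hode' t ht).sub h2
      have hymono : MonotoneOn y (Set.Ici 0) := by
        refine monotoneOn_of_deriv_nonneg (convex_Ici 0) ?_ ?_ ?_
        · exact (hxcont.sub ((continuous_const.mul continuous_id).continuousOn))
        · rw [interior_Ici]
          exact fun t ht => ((hydiff t (le_of_lt ht)).differentiableAt).differentiableWithinAt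
        · intro t ht
          rw [interior_Ici] at ht
          rw [(hydiff t ht.le).deriv]
          have hxtK : x t ∈ Set.Icc x₀ L := ⟨hlow t ht.le, hxleL t ht.le⟩
          have := hz₀min hxtK
          simp only [Set.mem_setOf_eq] at this
          linarith
      set T := max 1 ((L - x₀) / G z₀ + 1) with hTdef
      have hT0 : (0:ℝ) ≤ T := le_trans zero_le_one (le_max_left _ _)
      have hkey := hymono (Set.self_mem_Ici) (Set.mem_Ici.2 hT0) hT0
      have hy0 : y 0 = x₀ := by simp [hydef, hinit]
      have hTge : (L - x₀) / G z₀ + 1 ≤ T := le_max_right _ _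
      have hmul : L - x₀ + G z₀ ≤ G z₀ * T := by
        have := mul_le_mul_of_nonneg_left hTge hε.le
        have heq : G z₀ * ((L - x₀) / G z₀ + 1) = L - x₀ + G z₀ := by
          field_simp
        linarith [heq ▸ this]
      have hxT : x T ≤ L := hxleL T hT0
      simp only [hydef, hy0] at hkey
      -- hkey : x₀ ≤ x T - G z₀ * T
      linarith
    exact hLE ▸ hL
  · -- E < x₀ : antitone decrease to E
    have hlow : ∀ t : ℝ, 0 ≤ t → E ≤ x t := by
      intro t ht
      by_contra h
      push_neg at h
      set c := max ((E₁ + E) / 2) ((x t + E) / 2) with hcdef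
      have hc1 : E₁ < c := lt_of_lt_of_le (by linarith) (le_max_left _ _)
      have hc2 : c < E := max_lt (by linarith) (by linarith)
      have hc3 : x t ≤ c := le_trans (by linarith) (le_max_right _ _)
      have hb := solow_barrier_lower x G c hode' (by rw [hinit]; linarith)
        (hGpos c hc1 hc2) t ht
      linarith
    have hup : ∀ t : ℝ, 0 ≤ t → x t ≤ x₀ := by
      intro t ht
      by_contra h
      push_neg at h
      have hb := solow_barrier_upper x G ((x₀ + x t) / 2) hode'
        (by rw [hinit]; linarith) (hGneg _ (by linarith)) t ht
      linarith
    have hmono : AntitoneOn x (Set.Ici 0) := by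
      refine antitoneOn_of_deriv_nonpos (convex_Ici 0) hxcont hxdiff ?_
      intro t ht
      rw [interior_Ici] at ht
      rw [(hode' t ht.le).deriv]
      rcases eq_or_lt_of_le (hlow t ht.le) with h | h
      · rw [← h, hGE]
      · exact (hGneg _ h).le
    set L := sInf (x '' Set.Ici 0) with hLdef
    have hL := solow_tendsto_sInf x E hmono hlow
    have hne : (x '' Set.Ici 0).Nonempty := ⟨x 0, 0, Set.mem_Ici.2 le_rfl, rfl⟩
    have hbdd : BddBelow (x '' Set.Ici 0) := ⟨E, by rintro y ⟨t, ht, rfl⟩; exact hlow t ht⟩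
    have hLge : E ≤ L := le_csInf hne (by rintro y ⟨t, ht, rfl⟩; exact hlow t ht)
    have hLle : L ≤ x₀ := hinit ▸ csInf_le hbdd ⟨0, Set.mem_Ici.2 le_rfl, rfl⟩
    have hxgeL : ∀ t : ℝ, 0 ≤ t → L ≤ x t := fun t ht => csInf_le hbdd ⟨t, ht, rfl⟩
    have hLE : L = E := by
      by_contra h
      have hLE' : E < L := lt_of_le_of_ne hLge (Ne.symm h)
      obtain ⟨z₀, hz₀K, hz₀max⟩ := isCompact_Icc.exists_isMaxOn
        (Set.nonempty_Icc.2 hLle) hGcont.continuousOn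
      have hε : G z₀ < 0 := hGneg z₀ (lt_of_lt_of_le hLE' hz₀K.1)
      set y : ℝ → ℝ := fun t => x t - G z₀ * t with hydef
      have hydiff : ∀ t : ℝ, 0 ≤ t → HasDerivAt y (G (x t) - G z₀) t := by
        intro t ht
        have h2 : HasDerivAt (fun s : ℝ => G z₀ * s) (G z₀) t := by
          simpa using (hasDerivAt_id t).const_mul (G z₀)
        exact (hode' t ht).sub h2
      have hymono : AntitoneOn y (Set.Ici 0) := by
        refine antitoneOn_of_deriv_nonpos (convex_Ici 0) ?_ ?_ ?_
        · exact (hxcont.sub ((continuous_const.mul continuous_id).continuousOn))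
        · rw [interior_Ici]
          exact fun t ht => ((hydiff t (le_of_lt ht)).differentiableAt).differentiableWithinAt
        · intro t ht
          rw [interior_Ici] at ht
          rw [(hydiff t ht.le).deriv]
          have hxtK : x t ∈ Set.Icc L x₀ := ⟨hxgeL t ht.le, hup t ht.le⟩
          have := hz₀max hxtK
          simp only [Set.mem_setOf_eq] at this
          linarith
      set ε := -G z₀ with hεdef
      have hεpos : 0 < ε := by linarith
      set T := max 1 ((x₀ - L) / ε + 1) with hTdef
      have hT0 : (0:ℝ) ≤ T := le_trans zero_le_one (le_max_left _ _)
      have hkey := hymono (Set.self_mem_Ici) (Set.mem_Ici.2 hT0) hT0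
      have hy0 : y 0 = x₀ := by simp [hydef, hinit]
      have hTge : (x₀ - L) / ε + 1 ≤ T := le_max_right _ _
      have hmul : x₀ - L + ε ≤ ε * T := by
        have := mul_le_mul_of_nonneg_left hTge hεpos.le
        have heq : ε * ((x₀ - L) / ε + 1) = x₀ - L + ε := by
          field_simp
        linarith [heq ▸ this]
      have hxT : L ≤ x T := hxgeL T hT0
      simp only [hydef, hy0] at hkey
      -- hkey : x T - G z₀ * T ≤ x₀, with G z₀ = -ε
      have : G z₀ = -ε := by simp [hεdef]
      rw [this] at hkey
      linarith
    exact hLE ▸ hL
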